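/- Fix β > 0 and 0 < b < 1, and let K(n) = {(x,y) ∈ ℤ² : 0 ≤ y ≤ n and |x| ≤ y}. Then μ_t( every vertex of L lying in K(t^{b/β}) belongs to ℂ₀(t) ) → 1 as t → ∞. (Lemma 3.) -/

import Mathlib

open MeasureTheory ProbabilityTheory Real Filter

namespace OrientedPoisson

/-- Vertices of `ℤ²`; the oriented lattice consists of those with even coordinate sum. -/
abbrev Vertex := ℤ × ℤ

/-- Membership in the oriented lattice `L = {(m,n) : m + n even}`. -/
def IsVertex (v : Vertex) : Prop := (v.1 + v.2) % 2 = 0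

/-- An oriented edge, given by its lower endpoint and its direction
(`right = true` means the edge goes to `(m+1, n+1)`, else to `(m-1, n+1)`). -/
structure Edge where
  lower : Vertex
  right : Bool

/-- The upper endpoint of an edge. -/
def Edge.upper (e : Edge) : Vertex :=
  (e.lower.1 + (if e.right then 1 else -1), e.lower.2 + 1)

/-- A percolation configuration: each edge is open (`true`) or closed. -/
abbrev Config := Edge → Bool

/-- One open oriented step from `u` to `v` in configuration `ω`, along an edge of the lattice. -/
def Step (ω : Config) (u v : Vertex) : Prop :=
  ∃ e : Edge, IsVertex e.lower ∧ e.lower = u ∧ e.upper = v ∧ ω e = true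

/-- There is an open directed path from `u` to `v` in `ω`. -/
def Reach (ω : Config) (u v : Vertex) : Prop := Relation.ReflTransGen (Step ω) u v

/-- The cluster `ℂ₀` of the origin: all vertices reachable from `(0,0)` by open directed paths. -/
def cluster (ω : Config) : Set Vertex := {v | Reach ω ((0, 0) : Vertex) v}

/-- The edge-opening probability `ρ(y,t) = 1 - exp(-t y^(-β))`. -/
noncomputable def rho (β y t : ℝ) : ℝ := 1 - Real.exp (-t * y ^ (-β))

/-- `μ` is a product measure on configurations with edge marginals `p e`. -/
def IsProductMeasure (μ : Measure Config) (p : Edge → ℝ) : Prop :=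
  IsProbabilityMeasure μ ∧
  iIndepFun (fun e ω => ω e) μ ∧
  ∀ e : Edge, (μ {ω | ω e = true}).toReal = p e

/-- `μ` is the Poisson percolation measure at time `t > 0` (with rate exponent `β`):
edges are independent and an edge with lower endpoint at height `n ≥ 0` is open with
probability `ρ(n + 1/2, t)`. -/
def IsPoisson (β t : ℝ) (μ : Measure Config) : Prop :=
  IsProbabilityMeasure μ ∧
  iIndepFun (fun e ω => ω e) μ ∧
  ∀ e : Edge, 0 ≤ e.lower.2 →
    (μ {ω | ω e = true}).toReal = rho β ((e.lower.2 : ℝ) + 1 / 2) t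

/-- `μ` is homogeneous oriented percolation with parameter `p`. -/
def IsHomogeneous (p : ℝ) (μ : Measure Config) : Prop :=
  IsProductMeasure μ (fun _ => p)

/-- The critical probability `p_c = inf {p ∈ [0,1] : θ(p) > 0}` where
`θ(p) = P_p(|𝒞₀| = ∞)`. -/
noncomputable def pc : ℝ :=
  sInf {p : ℝ | p ∈ Set.Icc (0 : ℝ) 1 ∧
    ∀ μ : Measure Config, IsHomogeneous p μ → 0 < μ {ω | (cluster ω).Infinite}}

/-- `n(p,t)`: the largest integer height `y ≥ 1` at which `ρ(y,t) ≥ p`. -/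
noncomputable def nPT (β p t : ℝ) : ℤ :=
  sSup {y : ℤ | 1 ≤ y ∧ p ≤ rho β (y : ℝ) t}

/-- `N = n(p_c, t)`. -/
noncomputable def bigN (β t : ℝ) : ℤ := nPT β pc t

/-! ### Auxiliary lemmas -/

/-- Deterministic statement: if every edge whose lower endpoint lies in the (open-topped)
triangle of height `M` is open, then every lattice vertex in the triangle of height `M`
is reachable from the origin. -/
lemma reach_triangle (M : ℤ) (ω : Config)
    (h : ∀ e : Edge, IsVertex e.lower → 0 ≤ e.lower.2 → e.lower.2 < M →
      |e.lower.1| ≤ e.lower.2 → ω e = true) :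
    ∀ n : ℕ, ∀ v : Vertex, v.2 = (n : ℤ) → IsVertex v → v.2 ≤ M → |v.1| ≤ v.2 →
      Reach ω ((0,0) : Vertex) v := by
  intro n
  induction n with
  | zero =>
    intro v hv2 _ _ habs
    have habs' := abs_le.mp habs
    push_cast at hv2
    have : v = ((0,0) : Vertex) := by
      obtain ⟨x, y⟩ := v
      simp only [Prod.mk.injEq]
      constructor <;> omega
    rw [this]
    exact Relation.ReflTransGen.refl
  | succ k ih =>
    intro v hv2 hvL hvM habs
    have habs' := abs_le.mp habs
    have hL : (v.1 + v.2) % 2 = 0 := hvL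
    by_cases hx : 0 < v.1
    · set u : Vertex := (v.1 - 1, v.2 - 1) with hu
      have huL : IsVertex u := by unfold IsVertex; simp only [hu]; omega
      have huabs : |u.1| ≤ u.2 := by simp only [hu]; rw [abs_le]; constructor <;> omega
      have hreach : Reach ω ((0,0) : Vertex) u :=
        ih u (by simp [hu]; omega) huL (by simp [hu]; omega) huabs
      refine hreach.tail ⟨⟨u, true⟩, huL, rfl, ?_,
        h _ huL (by simp [hu]; omega) (by simp [hu]; omega) huabs⟩
      show ((u.1 + 1, u.2 + 1) : Vertex) = v
      simp only [hu]; obtain ⟨x, y⟩ := v; simp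
    · set u : Vertex := (v.1 + 1, v.2 - 1) with hu
      have huL : IsVertex u := by unfold IsVertex; simp only [hu]; omega
      have huabs : |u.1| ≤ u.2 := by simp only [hu]; rw [abs_le]; constructor <;> omega
      have hreach : Reach ω ((0,0) : Vertex) u :=
        ih u (by simp [hu]; omega) huL (by simp [hu]; omega) huabs
      refine hreach.tail ⟨⟨u, false⟩, huL, rfl, ?_,
        h _ huL (by simp [hu]; omega) (by simp [hu]; omega) huabs⟩
      show ((u.1 + -1, u.2 + 1) : Vertex) = v
      simp only [hu]; obtain ⟨x, y⟩ := v; simp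

noncomputable instance : DecidableEq Edge := Classical.decEq _

/-- The probability that a given edge at nonnegative height is closed. -/
lemma bad_measure {β t : ℝ} {μ : Measure Config} (hμ : IsPoisson β t μ) (ht : 0 ≤ t)
    (e : Edge) (hn : 0 ≤ e.lower.2) :
    μ {ω | ¬ ω e = true} =
      ENNReal.ofReal (Real.exp (-t * ((e.lower.2 : ℝ) + 1 / 2) ^ (-β))) := by
  obtain ⟨hprob, -, hmarg⟩ := hμ
  haveI := hprob
  have hA : MeasurableSet {ω : Config | ω e = true} := by
    have : {ω : Config | ω e = true} = (fun ω : Config => ω e) ⁻¹' {true} := rfl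
    rw [this]
    exact (measurable_pi_apply e) (measurableSet_singleton true)
  have hy : (0:ℝ) ≤ ((e.lower.2 : ℝ) + 1 / 2) ^ (-β) := by
    apply Real.rpow_nonneg
    have : (0:ℝ) ≤ (e.lower.2 : ℝ) := by exact_mod_cast hn
    linarith
  have hrho0 : 0 ≤ rho β ((e.lower.2 : ℝ) + 1 / 2) t := by
    unfold rho
    have : Real.exp (-t * ((e.lower.2 : ℝ) + 1 / 2) ^ (-β)) ≤ 1 := by
      apply Real.exp_le_one_iff.mpr
      have : 0 ≤ t * ((e.lower.2 : ℝ) + 1 / 2) ^ (-β) := mul_nonneg ht hy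
      linarith
    linarith
  have hAval : μ {ω : Config | ω e = true} =
      ENNReal.ofReal (rho β ((e.lower.2 : ℝ) + 1 / 2) t) := by
    rw [← hmarg e hn, ENNReal.ofReal_toReal (measure_ne_top μ _)]
  have hc : {ω : Config | ¬ ω e = true} = {ω : Config | ω e = true}ᶜ := rfl
  rw [hc, measure_compl hA (measure_ne_top μ _), measure_univ, hAval,
    ← ENNReal.ofReal_one, ← ENNReal.ofReal_sub _ hrho0]
  congr 1
  unfold rho
  ring

/-- The finite set of edges whose lower endpoint lies in the triangle of height `M`. -/
noncomputable def badS (M : ℤ) : Finset Edge :=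
  Finset.image (fun p : (ℤ × ℤ) × Bool => Edge.mk p.1 p.2)
    ((Finset.Icc (-M) M ×ˢ Finset.Icc 0 M) ×ˢ (Finset.univ : Finset Bool))

lemma mem_badS {M : ℤ} (e : Edge) (h0 : 0 ≤ e.lower.2) (h1 : e.lower.2 ≤ M)
    (h2 : |e.lower.1| ≤ e.lower.2) : e ∈ badS M := by
  unfold badS
  refine Finset.mem_image.mpr ⟨⟨e.lower, e.right⟩, ?_, rfl⟩
  have := abs_le.mp h2
  simp only [Finset.mem_product, Finset.mem_Icc, Finset.mem_univ, and_true]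
  omega

lemma badS_bounds {M : ℤ} {e : Edge} (he : e ∈ badS M) : 0 ≤ e.lower.2 ∧ e.lower.2 ≤ M := by
  unfold badS at he
  obtain ⟨p, hp, rfl⟩ := Finset.mem_image.mp he
  simp only [Finset.mem_product, Finset.mem_Icc] at hp
  exact ⟨hp.1.2.1, hp.1.2.2⟩

lemma badS_card {M : ℤ} (hM : 0 ≤ M) :
    ((badS M).card : ℝ) ≤ 2 * (2 * (M : ℝ) + 1) * ((M : ℝ) + 1) := by
  have h1 : (badS M).card ≤
      ((Finset.Icc (-M) M ×ˢ Finset.Icc 0 M) ×ˢ (Finset.univ : Finset Bool)).card := by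
    unfold badS; exact Finset.card_image_le
  have key : ((Finset.Icc (-M) M ×ˢ Finset.Icc 0 M) ×ˢ (Finset.univ : Finset Bool)).card
      = (2 * M + 1).toNat * (M + 1).toNat * 2 := by
    simp only [Finset.card_product, Int.card_Icc, Finset.card_univ, Fintype.card_bool]
    congr 1; congr 1 <;> omega
  rw [key] at h1
  have c1 : (((2 * M + 1).toNat : ℕ) : ℝ) = 2 * (M : ℝ) + 1 := by
    rw [show (((2 * M + 1).toNat : ℕ) : ℝ) = ((((2 * M + 1).toNat : ℕ) : ℤ) : ℝ) by push_cast; ring,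
      Int.toNat_of_nonneg (by omega)]
    push_cast; ring
  have c2 : (((M + 1).toNat : ℕ) : ℝ) = (M : ℝ) + 1 := by
    rw [show (((M + 1).toNat : ℕ) : ℝ) = ((((M + 1).toNat : ℕ) : ℤ) : ℝ) by push_cast; ring,
      Int.toNat_of_nonneg (by omega)]
    push_cast; ring
  calc ((badS M).card : ℝ) ≤ (((2 * M + 1).toNat * (M + 1).toNat * 2 : ℕ) : ℝ) := by
        exact_mod_cast h1
    _ = 2 * (2 * (M : ℝ) + 1) * ((M : ℝ) + 1) := by push_cast [c1, c2] at *; ring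

/-- The main quantitative estimate: for `t ≥ 1` the complement of the solid-triangle
event has probability at most `12 t^{2b/β} exp(-2^{-β} t^{1-b})`. -/
lemma main_bound (β b : ℝ) (hβ : 0 < β) (hb0 : 0 < b) (hb1 : b < 1)
    {t : ℝ} (ht1 : 1 ≤ t) {μ : Measure Config} (hμ : IsPoisson β t μ) :
    μ {ω : Config | ∀ v : Vertex, IsVertex v → 0 ≤ v.2 → (v.2 : ℝ) ≤ t ^ (b / β) →
        |v.1| ≤ v.2 → v ∈ cluster ω}ᶜ ≤
      ENNReal.ofReal (12 * t ^ (2 * b / β) * Real.exp (-(2:ℝ) ^ (-β) * t ^ (1 - b))) := by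
  have ht0 : 0 < t := lt_of_lt_of_le one_pos ht1
  set T : ℝ := t ^ (b / β) with hT
  set M : ℤ := ⌊T⌋ with hM
  have hT1 : 1 ≤ T := Real.one_le_rpow ht1 (by positivity)
  have hM1 : (1 : ℤ) ≤ M := Int.le_floor.mpr (by exact_mod_cast hT1)
  have hMT : (M : ℝ) ≤ T := Int.floor_le T
  -- Step 1: inclusion into a finite union of single-edge events
  have hincl : {ω : Config | ∀ v : Vertex, IsVertex v → 0 ≤ v.2 → (v.2 : ℝ) ≤ t ^ (b / β) →
      |v.1| ≤ v.2 → v ∈ cluster ω}ᶜ ⊆ ⋃ e ∈ badS M, {ω : Config | ¬ ω e = true} := by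
    intro ω hω
    by_contra hnot
    refine hω ?_
    intro v hv hv0 hvT hvabs
    have hopen : ∀ e : Edge, IsVertex e.lower → 0 ≤ e.lower.2 → e.lower.2 < M →
        |e.lower.1| ≤ e.lower.2 → ω e = true := by
      intro e he1 he2 he3 he4
      by_contra hcl
      exact hnot (Set.mem_biUnion (mem_badS e he2 (le_of_lt he3) he4) hcl)
    have hvM : v.2 ≤ M := Int.le_floor.mpr hvT
    exact reach_triangle M ω hopen v.2.toNat v (by omega) hv hvM hvabs
  -- Step 2: per-edge probability bound
  have hexp : ∀ e ∈ badS M, μ {ω : Config | ¬ ω e = true}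
      ≤ ENNReal.ofReal (Real.exp (-(2:ℝ) ^ (-β) * t ^ (1 - b))) := by
    intro e he
    obtain ⟨he0, heM⟩ := badS_bounds he
    rw [bad_measure hμ ht0.le e he0]
    apply ENNReal.ofReal_le_ofReal
    apply Real.exp_le_exp.mpr
    have hn : (0:ℝ) ≤ (e.lower.2 : ℝ) := by exact_mod_cast he0
    have hnM : (e.lower.2 : ℝ) ≤ (M : ℝ) := by exact_mod_cast heM
    have hbase : (e.lower.2 : ℝ) + 1 / 2 ≤ 2 * T := by linarith
    have h1 : (2 * T) ^ (-β) ≤ ((e.lower.2 : ℝ) + 1 / 2) ^ (-β) :=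
      Real.rpow_le_rpow_of_nonpos (by linarith) hbase (by linarith)
    have h2 : (2 * T) ^ (-β) = (2:ℝ) ^ (-β) * t ^ (-b) := by
      rw [Real.mul_rpow (by norm_num) (by positivity)]
      congr 1
      rw [hT, ← Real.rpow_mul ht0.le]
      congr 1
      field_simp
    have ht1b : t ^ (1 - b) = t * t ^ (-b) := by
      rw [show (1:ℝ) - b = 1 + -b by ring, Real.rpow_add ht0, Real.rpow_one]
    have h3 : (2:ℝ) ^ (-β) * t ^ (1 - b) ≤ t * (((e.lower.2 : ℝ) + 1 / 2) ^ (-β)) := by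
      calc (2:ℝ) ^ (-β) * t ^ (1 - b) = t * ((2:ℝ) ^ (-β) * t ^ (-b)) := by
            rw [ht1b]; ring
        _ = t * ((2 * T) ^ (-β)) := by rw [h2]
        _ ≤ t * (((e.lower.2 : ℝ) + 1 / 2) ^ (-β)) :=
            mul_le_mul_of_nonneg_left h1 ht0.le
    linarith
  -- Step 3: counting
  have hM1R : (1:ℝ) ≤ (M : ℝ) := by exact_mod_cast hM1
  have hcard2 : ((badS M).card : ℝ) ≤ 12 * t ^ (2 * b / β) := by
    refine (badS_card (by omega : (0:ℤ) ≤ M)).trans ?_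
    have hTT : T * T = t ^ (2 * b / β) := by
      rw [hT, ← Real.rpow_add ht0]; congr 1; ring
    rw [← hTT]
    nlinarith [hMT, hT1, hM1R]
  -- put everything together
  calc μ {ω : Config | ∀ v : Vertex, IsVertex v → 0 ≤ v.2 → (v.2 : ℝ) ≤ t ^ (b / β) →
        |v.1| ≤ v.2 → v ∈ cluster ω}ᶜ
      ≤ μ (⋃ e ∈ badS M, {ω : Config | ¬ ω e = true}) := measure_mono hincl
    _ ≤ ∑ e ∈ badS M, μ {ω : Config | ¬ ω e = true} := measure_biUnion_finset_le _ _
    _ ≤ ∑ _e ∈ badS M, ENNReal.ofReal (Real.exp (-(2:ℝ) ^ (-β) * t ^ (1 - b))) :=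
        Finset.sum_le_sum hexp
    _ = (badS M).card • ENNReal.ofReal (Real.exp (-(2:ℝ) ^ (-β) * t ^ (1 - b))) :=
        Finset.sum_const _
    _ = ENNReal.ofReal (((badS M).card : ℝ) * Real.exp (-(2:ℝ) ^ (-β) * t ^ (1 - b))) := by
        rw [nsmul_eq_mul, ← ENNReal.ofReal_natCast, ← ENNReal.ofReal_mul (by positivity)]
    _ ≤ ENNReal.ofReal (12 * t ^ (2 * b / β) * Real.exp (-(2:ℝ) ^ (-β) * t ^ (1 - b))) := by
        apply ENNReal.ofReal_le_ofReal
        exact mul_le_mul_of_nonneg_right hcard2 (Real.exp_nonneg _)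

/-- Lemma 3: for `0 < b < 1`, with probability tending to one as `t → ∞`, every lattice
vertex in the triangle `K(t^{b/β}) = {(x,y) : 0 ≤ y ≤ t^{b/β}, |x| ≤ y}` belongs to `ℂ₀(t)`. -/
theorem solid_triangle (β b : ℝ) (hβ : 0 < β) (hb0 : 0 < b) (hb1 : b < 1)
    (μ : ℝ → Measure Config) (hμ : ∀ t : ℝ, 0 < t → IsPoisson β t (μ t)) :
    Tendsto
      (fun t : ℝ => μ t {ω : Config |
        ∀ v : Vertex, IsVertex v → 0 ≤ v.2 → (v.2 : ℝ) ≤ t ^ (b / β) →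
          |v.1| ≤ v.2 → v ∈ cluster ω})
      atTop (nhds 1) := by
  have hc : (0:ℝ) < (2:ℝ) ^ (-β) := Real.rpow_pos_of_pos two_pos _
  have hb' : (0:ℝ) < 1 - b := by linarith
  set D : ℝ → ℝ :=
    fun t => 12 * t ^ (2 * b / β) * Real.exp (-(2:ℝ) ^ (-β) * t ^ (1 - b)) with hD
  have hDlim : Tendsto D atTop (nhds 0) := by
    have base := tendsto_rpow_mul_exp_neg_mul_atTop_nhds_zero ((2 * b / β) / (1 - b)) _ hc
    have comp := base.comp (tendsto_rpow_atTop hb')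
    have comp12 := comp.const_mul (12:ℝ)
    rw [mul_zero] at comp12
    refine Filter.Tendsto.congr' ?_ comp12
    filter_upwards [eventually_gt_atTop 0] with t ht
    have hpow : ((t ^ (1 - b)) ^ ((2 * b / β) / (1 - b))) = t ^ (2 * b / β) := by
      rw [← Real.rpow_mul ht.le]
      congr 1
      rw [mul_comm, div_mul_cancel₀ _ (ne_of_gt hb')]
    simp only [Function.comp_apply, hD]
    rw [hpow]
    ring
  have hupper : ∀ᶠ t in atTop, μ t {ω : Config |
      ∀ v : Vertex, IsVertex v → 0 ≤ v.2 → (v.2 : ℝ) ≤ t ^ (b / β) →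
        |v.1| ≤ v.2 → v ∈ cluster ω} ≤ 1 := by
    filter_upwards [eventually_ge_atTop 1] with t ht1
    haveI := (hμ t (lt_of_lt_of_le one_pos ht1)).1
    exact prob_le_one
  have hlower : ∀ᶠ t in atTop, 1 - ENNReal.ofReal (D t) ≤ μ t {ω : Config |
      ∀ v : Vertex, IsVertex v → 0 ≤ v.2 → (v.2 : ℝ) ≤ t ^ (b / β) →
        |v.1| ≤ v.2 → v ∈ cluster ω} := by
    filter_upwards [eventually_ge_atTop 1] with t ht1
    have ht0 : (0:ℝ) < t := lt_of_lt_of_le one_pos ht1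
    haveI := (hμ t ht0).1
    have hbound := main_bound β b hβ hb0 hb1 ht1 (hμ t ht0)
    rw [tsub_le_iff_right]
    set A : Set Config := {ω : Config |
      ∀ v : Vertex, IsVertex v → 0 ≤ v.2 → (v.2 : ℝ) ≤ t ^ (b / β) →
        |v.1| ≤ v.2 → v ∈ cluster ω} with hA
    calc (1:ENNReal) = μ t Set.univ := measure_univ.symm
      _ = μ t (A ∪ Aᶜ) := by rw [Set.union_compl_self]
      _ ≤ μ t A + μ t Aᶜ := measure_union_le _ _
      _ ≤ μ t A + ENNReal.ofReal (D t) := add_le_add_right hbound _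
  refine tendsto_of_tendsto_of_tendsto_of_le_of_le' ?_ tendsto_const_nhds hlower hupper
  have h0 : Tendsto (fun t => ENNReal.ofReal (D t)) atTop (nhds 0) := by
    rw [show (0:ENNReal) = ENNReal.ofReal 0 by simp]
    exact ENNReal.tendsto_ofReal hDlim
  have hsub := ENNReal.Tendsto.sub (tendsto_const_nhds :
      Tendsto (fun _ : ℝ => (1:ENNReal)) atTop (nhds 1)) h0 (Or.inl ENNReal.one_ne_top)
  simpa using hsub

end OrientedPoisson
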